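/- Identifiability of GBM components (Theorem 1). Suppose M < min{I, J}, and suppose (A₁,B₁,C₁,D₁,U₁,V₁) and (A₂,B₂,C₂,D₂,U₂,V₂) are two GBM parameter tuples, each satisfying Condition 1 with the same covariate matrices X and Z. If X A₁ᵀ + B₁ Zᵀ + X C₁ Zᵀ + U₁ D₁ V₁ᵀ = X A₂ᵀ + B₂ Zᵀ + X C₂ Zᵀ + U₂ D₂ V₂ᵀ, then A₁ = A₂, B₁ = B₂, C₁ = C₂, D₁ = D₂, U₁ = U₂, and V₁ = V₂. -/

import Mathlib

open Matrix

/-- Condition 1 (identifiability constraints) for a GBM parameter tuple. -/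
def Cond1 {I J K L M : ℕ} (X : Matrix (Fin I) (Fin K) ℝ) (Z : Matrix (Fin J) (Fin L) ℝ)
    (A : Matrix (Fin J) (Fin K) ℝ) (B : Matrix (Fin I) (Fin L) ℝ)
    (D : Matrix (Fin M) (Fin M) ℝ)
    (U : Matrix (Fin I) (Fin M) ℝ) (V : Matrix (Fin J) (Fin M) ℝ) : Prop :=
  IsUnit (Xᵀ * X) ∧ IsUnit (Zᵀ * Z) ∧
  Xᵀ * B = 0 ∧ Zᵀ * A = 0 ∧ Xᵀ * U = 0 ∧ Zᵀ * V = 0 ∧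
  Uᵀ * U = 1 ∧ Vᵀ * V = 1 ∧
  D.IsDiag ∧ StrictAnti (fun m : Fin M => D m m) ∧ (∀ m, 0 < D m m) ∧
  (∀ (m : Fin M) (i : Fin I),
    (U i m ≠ 0 ∧ ∀ i' : Fin I, i' < i → U i' m = 0) → 0 < U i m)

lemma cancelL {n p : Type*} [Fintype n] [DecidableEq n] [Fintype p]
    {G : Matrix n n ℝ} (hG : IsUnit G) {W₁ W₂ : Matrix n p ℝ}
    (h : G * W₁ = G * W₂) : W₁ = W₂ := by
  have hd : IsUnit G.det := (Matrix.isUnit_iff_isUnit_det G).mp hG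
  have h2 := congrArg (fun W => G⁻¹ * W) h
  simpa [← Matrix.mul_assoc, Matrix.nonsing_inv_mul G hd] using h2

lemma cancelR {n p : Type*} [Fintype n] [DecidableEq n] [Fintype p]
    {G : Matrix n n ℝ} (hG : IsUnit G) {W₁ W₂ : Matrix p n ℝ}
    (h : W₁ * G = W₂ * G) : W₁ = W₂ := by
  have hd : IsUnit G.det := (Matrix.isUnit_iff_isUnit_det G).mp hG
  have h2 := congrArg (fun W => W * G⁻¹) h
  simpa [Matrix.mul_assoc, Matrix.mul_nonsing_inv G hd] using h2

lemma colnorm {J M : ℕ} (V : Matrix (Fin J) (Fin M) ℝ) (hV : Vᵀ * V = 1)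
    (Q : Matrix (Fin M) (Fin M) ℝ) : (V * Q)ᵀ * (V * Q) = Qᵀ * Q := by
  rw [Matrix.transpose_mul, Matrix.mul_assoc, ← Matrix.mul_assoc Vᵀ, hV, Matrix.one_mul]

lemma gram_diag {n M : ℕ} (Q : Matrix (Fin n) (Fin M) ℝ) (j : Fin M) :
    (Qᵀ * Q) j j = ∑ i, Q i j * Q i j := by
  rw [Matrix.mul_apply]
  exact Finset.sum_congr rfl fun i _ => by rw [Matrix.transpose_apply]

lemma strictMonoSurjId {M : ℕ} {f : Fin M → Fin M}
    (hf : StrictMono f) (hs : Function.Surjective f) (j : Fin M) : f j = j := by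
  have h := Subsingleton.elim (StrictMono.orderIsoOfSurjective f hf hs) (OrderIso.refl (Fin M))
  calc f j = (StrictMono.orderIsoOfSurjective f hf hs) j := rfl
    _ = j := by rw [h]; rfl


lemma svd_unique {I J M : ℕ}
    (U₁ U₂ : Matrix (Fin I) (Fin M) ℝ) (V₁ V₂ : Matrix (Fin J) (Fin M) ℝ)
    (d₁ d₂ : Fin M → ℝ)
    (hUU1 : U₁ᵀ * U₁ = 1) (hVV1 : V₁ᵀ * V₁ = 1)
    (hUU2 : U₂ᵀ * U₂ = 1) (hVV2 : V₂ᵀ * V₂ = 1)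
    (h1anti : StrictAnti d₁) (h2anti : StrictAnti d₂)
    (h1pos : ∀ m, 0 < d₁ m) (h2pos : ∀ m, 0 < d₂ m)
    (hsgn1 : ∀ (m : Fin M) (i : Fin I), (U₁ i m ≠ 0 ∧ ∀ i', i' < i → U₁ i' m = 0) → 0 < U₁ i m)
    (hsgn2 : ∀ (m : Fin M) (i : Fin I), (U₂ i m ≠ 0 ∧ ∀ i', i' < i → U₂ i' m = 0) → 0 < U₂ i m)
    (hT : U₁ * diagonal d₁ * V₁ᵀ = U₂ * diagonal d₂ * V₂ᵀ) :
    d₁ = d₂ ∧ U₁ = U₂ ∧ V₁ = V₂ := by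
  -- multiply hT on the right by V₂
  have hUDN : U₁ * (diagonal d₁ * (V₁ᵀ * V₂)) = U₂ * diagonal d₂ := by
    have h := congrArg (fun W => W * V₂) hT
    simp only [Matrix.mul_assoc] at h ⊢
    rw [hVV2, Matrix.mul_one] at h
    exact h
  -- transpose relation, multiplied by U₂
  have hTt : V₁ * (diagonal d₁ * U₁ᵀ) = V₂ * (diagonal d₂ * U₂ᵀ) := by
    have h := congrArg Matrix.transpose hT
    simpa [Matrix.transpose_mul, Matrix.diagonal_transpose, Matrix.mul_assoc] using h
  have hVDP : V₁ * (diagonal d₁ * (U₁ᵀ * U₂)) = V₂ * diagonal d₂ := by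
    have h := congrArg (fun W => W * U₂) hTt
    simp only [Matrix.mul_assoc] at h ⊢
    rw [hUU2, Matrix.mul_one] at h
    exact h
  -- D₁ N = P D₂
  have hDN : diagonal d₁ * (V₁ᵀ * V₂) = U₁ᵀ * U₂ * diagonal d₂ := by
    have h : U₁ᵀ * (U₁ * (diagonal d₁ * (V₁ᵀ * V₂))) = U₁ᵀ * (U₂ * diagonal d₂) := by
      rw [hUDN]
    rw [← Matrix.mul_assoc, hUU1, Matrix.one_mul] at h
    rw [h, ← Matrix.mul_assoc]
  -- D₁ P = N D₂
  have hDP : diagonal d₁ * (U₁ᵀ * U₂) = V₁ᵀ * V₂ * diagonal d₂ := by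
    have h : V₁ᵀ * (V₁ * (diagonal d₁ * (U₁ᵀ * U₂))) = V₁ᵀ * (V₂ * diagonal d₂) := by
      rw [hVDP]
    rw [← Matrix.mul_assoc, hVV1, Matrix.one_mul] at h
    rw [h, ← Matrix.mul_assoc]
  -- E₁ P = P E₂
  have hE1P : diagonal d₁ * (diagonal d₁ * (U₁ᵀ * U₂))
      = U₁ᵀ * U₂ * (diagonal d₂ * diagonal d₂) := by
    calc diagonal d₁ * (diagonal d₁ * (U₁ᵀ * U₂))
        = diagonal d₁ * (V₁ᵀ * V₂ * diagonal d₂) := by rw [hDP]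
      _ = diagonal d₁ * (V₁ᵀ * V₂) * diagonal d₂ := (Matrix.mul_assoc _ _ _).symm
      _ = U₁ᵀ * U₂ * diagonal d₂ * diagonal d₂ := by rw [hDN]
      _ = U₁ᵀ * U₂ * (diagonal d₂ * diagonal d₂) := Matrix.mul_assoc _ _ _
  have hE1N : diagonal d₁ * (diagonal d₁ * (V₁ᵀ * V₂))
      = V₁ᵀ * V₂ * (diagonal d₂ * diagonal d₂) := by
    calc diagonal d₁ * (diagonal d₁ * (V₁ᵀ * V₂))
        = diagonal d₁ * (U₁ᵀ * U₂ * diagonal d₂) := by rw [hDN]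
      _ = diagonal d₁ * (U₁ᵀ * U₂) * diagonal d₂ := (Matrix.mul_assoc _ _ _).symm
      _ = V₁ᵀ * V₂ * diagonal d₂ * diagonal d₂ := by rw [hDP]
      _ = V₁ᵀ * V₂ * (diagonal d₂ * diagonal d₂) := Matrix.mul_assoc _ _ _
  -- support lemmas
  have hsq_eq : ∀ (i j : Fin M) (c : ℝ), c ≠ 0 →
      d₁ i * (d₁ i * c) = c * (d₂ j * d₂ j) → d₁ i = d₂ j := by
    intro i j c hc h
    have hsq : d₁ i * d₁ i = d₂ j * d₂ j := by
      have h2 : c * (d₁ i * d₁ i) = c * (d₂ j * d₂ j) := by ring_nf; ring_nf at h; linarith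
      exact mul_left_cancel₀ hc h2
    nlinarith [h1pos i, h2pos j]
  have hsuppP : ∀ i j, (U₁ᵀ * U₂) i j ≠ 0 → d₁ i = d₂ j := by
    intro i j hne
    have h := congrFun (congrFun hE1P i) j
    simp only [Matrix.diagonal_mul_diagonal, Matrix.diagonal_mul, Matrix.mul_diagonal] at h
    exact hsq_eq i j _ hne h
  have hsuppN : ∀ i j, (V₁ᵀ * V₂) i j ≠ 0 → d₁ i = d₂ j := by
    intro i j hne
    have h := congrFun (congrFun hE1N i) j
    simp only [Matrix.diagonal_mul_diagonal, Matrix.diagonal_mul, Matrix.mul_diagonal] at h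
    exact hsq_eq i j _ hne h
  -- hUD : multiply hT on the right by V₁
  have hUD : U₁ * diagonal d₁ = U₂ * (diagonal d₂ * (V₂ᵀ * V₁)) := by
    have h := congrArg (fun W => W * V₁) hT
    simp only [Matrix.mul_assoc] at h ⊢
    rw [hVV1, Matrix.mul_one] at h
    exact h
  -- column norms of P weighted by d₁
  have hcolP : (diagonal d₁ * (U₁ᵀ * U₂))ᵀ * (diagonal d₁ * (U₁ᵀ * U₂))
      = diagonal d₂ * diagonal d₂ := by
    calc (diagonal d₁ * (U₁ᵀ * U₂))ᵀ * (diagonal d₁ * (U₁ᵀ * U₂))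
        = (V₁ * (diagonal d₁ * (U₁ᵀ * U₂)))ᵀ * (V₁ * (diagonal d₁ * (U₁ᵀ * U₂))) :=
          (colnorm V₁ hVV1 _).symm
      _ = (V₂ * diagonal d₂)ᵀ * (V₂ * diagonal d₂) := by rw [hVDP]
      _ = (diagonal d₂)ᵀ * diagonal d₂ := colnorm V₂ hVV2 _
      _ = diagonal d₂ * diagonal d₂ := by rw [Matrix.diagonal_transpose]
  have hrowN : (diagonal d₂ * (V₂ᵀ * V₁))ᵀ * (diagonal d₂ * (V₂ᵀ * V₁))
      = diagonal d₁ * diagonal d₁ := by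
    calc (diagonal d₂ * (V₂ᵀ * V₁))ᵀ * (diagonal d₂ * (V₂ᵀ * V₁))
        = (U₂ * (diagonal d₂ * (V₂ᵀ * V₁)))ᵀ * (U₂ * (diagonal d₂ * (V₂ᵀ * V₁))) :=
          (colnorm U₂ hUU2 _).symm
      _ = (U₁ * diagonal d₁)ᵀ * (U₁ * diagonal d₁) := by rw [hUD]
      _ = (diagonal d₁)ᵀ * diagonal d₁ := colnorm U₁ hUU1 _
      _ = diagonal d₁ * diagonal d₁ := by rw [Matrix.diagonal_transpose]
  -- existence of nonzero entries in each column of P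
  have hexP : ∀ j, ∃ i, (U₁ᵀ * U₂) i j ≠ 0 := by
    intro j
    have h := congrFun (congrFun hcolP j) j
    rw [gram_diag] at h
    have hne : ∑ i, (diagonal d₁ * (U₁ᵀ * U₂)) i j * (diagonal d₁ * (U₁ᵀ * U₂)) i j ≠ 0 := by
      rw [h, Matrix.diagonal_mul_diagonal, Matrix.diagonal_apply_eq]
      exact ne_of_gt (mul_pos (h2pos j) (h2pos j))
    obtain ⟨i, -, hi⟩ := Finset.exists_ne_zero_of_sum_ne_zero hne
    refine ⟨i, fun h0 => hi ?_⟩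
    rw [Matrix.diagonal_mul, h0, mul_zero, zero_mul]
  have hexN : ∀ i, ∃ j, (V₁ᵀ * V₂) i j ≠ 0 := by
    intro i
    have h := congrFun (congrFun hrowN i) i
    rw [gram_diag] at h
    have hne : ∑ j, (diagonal d₂ * (V₂ᵀ * V₁)) j i * (diagonal d₂ * (V₂ᵀ * V₁)) j i ≠ 0 := by
      rw [h, Matrix.diagonal_mul_diagonal, Matrix.diagonal_apply_eq]
      exact ne_of_gt (mul_pos (h1pos i) (h1pos i))
    obtain ⟨j, -, hj⟩ := Finset.exists_ne_zero_of_sum_ne_zero hne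
    have htr : (V₂ᵀ * V₁) j i = (V₁ᵀ * V₂) i j := by
      have : V₂ᵀ * V₁ = (V₁ᵀ * V₂)ᵀ := by
        rw [Matrix.transpose_mul, Matrix.transpose_transpose]
      rw [this, Matrix.transpose_apply]
    refine ⟨j, fun h0 => hj ?_⟩
    rw [Matrix.diagonal_mul, htr, h0, mul_zero, zero_mul]
  -- d₁ = d₂
  have hfex : ∀ j, ∃ i, d₁ i = d₂ j := fun j => (hexP j).imp fun i hi => hsuppP i j hi
  have hgex : ∀ i, ∃ j, d₂ j = d₁ i := fun i => (hexN i).imp fun j hj => (hsuppN i j hj).symm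
  choose f hf using hfex
  choose g hg using hgex
  have hfmono : StrictMono f := by
    intro a b hab
    have h2 : d₂ b < d₂ a := h2anti hab
    rw [← hf a, ← hf b] at h2
    exact h1anti.lt_iff_gt.mp h2
  have hfsurj : Function.Surjective f := by
    intro i
    refine ⟨g i, h1anti.injective ?_⟩
    rw [hf (g i), hg i]
  have hd : d₁ = d₂ := funext fun j => (congrArg d₁ (strictMonoSurjId hfmono hfsurj j)).symm.trans (hf j)
  subst hd
  -- P is diagonal with unit diagonal entries
  have hPdiag : ∀ i j, i ≠ j → (U₁ᵀ * U₂) i j = 0 := by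
    intro i j hij
    by_contra h0
    exact hij (h1anti.injective (hsuppP i j h0))
  have hPone : ∀ j, (U₁ᵀ * U₂) j j * (U₁ᵀ * U₂) j j = 1 := by
    intro j
    have h := congrFun (congrFun hcolP j) j
    rw [gram_diag] at h
    rw [Finset.sum_eq_single j
      (fun i _ hij => by rw [Matrix.diagonal_mul, hPdiag i j hij, mul_zero, zero_mul])
      (fun hmem => absurd (Finset.mem_univ j) hmem)] at h
    rw [Matrix.diagonal_mul, Matrix.diagonal_mul_diagonal, Matrix.diagonal_apply_eq] at h
    have hd2 : d₁ j * d₁ j ≠ 0 := ne_of_gt (mul_pos (h1pos j) (h1pos j))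
    refine mul_left_cancel₀ hd2 ?_
    linear_combination h
  -- N = P entrywise
  have hNP : ∀ i j, (V₁ᵀ * V₂) i j = (U₁ᵀ * U₂) i j := by
    intro i j
    have h := congrFun (congrFun hDN i) j
    rw [Matrix.diagonal_mul, Matrix.mul_diagonal] at h
    rcases eq_or_ne i j with rfl | hij
    · exact mul_left_cancel₀ (ne_of_gt (h1pos i)) (by linear_combination h)
    · rw [hPdiag i j hij, zero_mul] at h
      rw [hPdiag i j hij]
      exact mul_left_cancel₀ (ne_of_gt (h1pos i)) (by linear_combination h)
  -- entrywise formula for U₂ and V₂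
  have hU2 : ∀ i m, U₂ i m = U₁ i m * (U₁ᵀ * U₂) m m := by
    intro i m
    have h := congrFun (congrFun hUDN i) m
    rw [Matrix.mul_apply, Matrix.mul_apply] at h
    rw [Finset.sum_eq_single m
      (fun k _ hkm => by rw [Matrix.diagonal_mul, hNP k m, hPdiag k m hkm, mul_zero, mul_zero])
      (fun hmem => absurd (Finset.mem_univ m) hmem),
      Finset.sum_eq_single m
      (fun k _ hkm => by rw [Matrix.diagonal_apply_ne _ hkm, mul_zero])
      (fun hmem => absurd (Finset.mem_univ m) hmem)] at h
    rw [Matrix.diagonal_mul, hNP m m, Matrix.diagonal_apply_eq] at h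
    exact (mul_right_cancel₀ (ne_of_gt (h1pos m)) (by linear_combination h)).symm
  have hV2 : ∀ a m, V₂ a m = V₁ a m * (U₁ᵀ * U₂) m m := by
    intro a m
    have h := congrFun (congrFun hVDP a) m
    rw [Matrix.mul_apply, Matrix.mul_apply] at h
    rw [Finset.sum_eq_single m
      (fun k _ hkm => by rw [Matrix.diagonal_mul, hPdiag k m hkm, mul_zero, mul_zero])
      (fun hmem => absurd (Finset.mem_univ m) hmem),
      Finset.sum_eq_single m
      (fun k _ hkm => by rw [Matrix.diagonal_apply_ne _ hkm, mul_zero])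
      (fun hmem => absurd (Finset.mem_univ m) hmem)] at h
    rw [Matrix.diagonal_mul, Matrix.diagonal_apply_eq] at h
    exact (mul_right_cancel₀ (ne_of_gt (h1pos m)) (by linear_combination h)).symm
  -- the sign condition forces the diagonal of P to be 1
  have hP1 : ∀ m, (U₁ᵀ * U₂) m m = 1 := by
    intro m
    have hpne : (U₁ᵀ * U₂) m m ≠ 0 := by
      intro h0
      have := hPone m
      rw [h0, mul_zero] at this
      exact zero_ne_one this
    -- the first nonzero entry of column m of U₁
    have hex : ∃ i, U₁ i m ≠ 0 := by
      have h := congrFun (congrFun hUU1 m) m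
      rw [gram_diag] at h
      have hne : ∑ i, U₁ i m * U₁ i m ≠ 0 := by
        rw [h, Matrix.one_apply_eq]; exact one_ne_zero
      obtain ⟨i, -, hi⟩ := Finset.exists_ne_zero_of_sum_ne_zero hne
      exact ⟨i, fun h0 => hi (by rw [h0, zero_mul])⟩
    classical
    set S : Finset (Fin I) := Finset.univ.filter (fun i => U₁ i m ≠ 0) with hS
    have hSne : S.Nonempty := by
      obtain ⟨i, hi⟩ := hex
      exact ⟨i, by simp [hS, hi]⟩
    set i₀ := S.min' hSne with hi₀
    have hi₀mem : i₀ ∈ S := S.min'_mem hSne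
    have hi₀ne : U₁ i₀ m ≠ 0 := by
      have := hi₀mem
      rw [hS, Finset.mem_filter] at this
      exact this.2
    have hzero : ∀ i', i' < i₀ → U₁ i' m = 0 := by
      intro i' hlt
      by_contra h0
      have : i' ∈ S := by rw [hS, Finset.mem_filter]; exact ⟨Finset.mem_univ _, h0⟩
      exact absurd (S.min'_le i' this) (not_le.mpr hlt)
    have hpos1 : 0 < U₁ i₀ m := hsgn1 m i₀ ⟨hi₀ne, hzero⟩
    have hpos2 : 0 < U₂ i₀ m := by
      refine hsgn2 m i₀ ⟨?_, ?_⟩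
      · rw [hU2]; exact mul_ne_zero hi₀ne hpne
      · intro i' hlt; rw [hU2, hzero i' hlt, zero_mul]
    rw [hU2] at hpos2
    have hppos : 0 < (U₁ᵀ * U₂) m m := by
      rcases mul_pos_iff.mp hpos2 with ⟨_, h⟩ | ⟨h, _⟩
      · exact h
      · linarith
    have hfact : ((U₁ᵀ * U₂) m m - 1) * ((U₁ᵀ * U₂) m m + 1) = 0 := by
      linear_combination hPone m
    rcases mul_eq_zero.mp hfact with h | h
    · linarith
    · linarith
  refine ⟨rfl, ?_, ?_⟩
  · ext i m
    rw [hU2 i m, hP1 m, mul_one]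
  · ext a m
    rw [hV2 a m, hP1 m, mul_one]

/-- Theorem 1: identifiability of the GBM components. -/
theorem gbm_identifiability {I J K L M : ℕ}
    (hI : 0 < I) (hJ : 0 < J) (hK : 0 < K) (hL : 0 < L) (hM : 0 < M)
    (hMmin : M < min I J)
    (X : Matrix (Fin I) (Fin K) ℝ) (Z : Matrix (Fin J) (Fin L) ℝ)
    (A₁ A₂ : Matrix (Fin J) (Fin K) ℝ) (B₁ B₂ : Matrix (Fin I) (Fin L) ℝ)
    (C₁ C₂ : Matrix (Fin K) (Fin L) ℝ) (D₁ D₂ : Matrix (Fin M) (Fin M) ℝ)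
    (U₁ U₂ : Matrix (Fin I) (Fin M) ℝ) (V₁ V₂ : Matrix (Fin J) (Fin M) ℝ)
    (h₁ : Cond1 X Z A₁ B₁ D₁ U₁ V₁) (h₂ : Cond1 X Z A₂ B₂ D₂ U₂ V₂)
    (heq : X * A₁ᵀ + B₁ * Zᵀ + X * C₁ * Zᵀ + U₁ * D₁ * V₁ᵀ
         = X * A₂ᵀ + B₂ * Zᵀ + X * C₂ * Zᵀ + U₂ * D₂ * V₂ᵀ) :
    A₁ = A₂ ∧ B₁ = B₂ ∧ C₁ = C₂ ∧ D₁ = D₂ ∧ U₁ = U₂ ∧ V₁ = V₂ := by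
  obtain ⟨hX1, hZ1, hXB1, hZA1, hXU1, hZV1, hUU1, hVV1, hD1diag, hD1anti, hD1pos, hsgn1⟩ := h₁
  obtain ⟨-, -, hXB2, hZA2, hXU2, hZV2, hUU2, hVV2, hD2diag, hD2anti, hD2pos, hsgn2⟩ := h₂
  have hA1Z : A₁ᵀ * Z = 0 := by
    have := congrArg Matrix.transpose hZA1; simpa [Matrix.transpose_mul] using this
  have hA2Z : A₂ᵀ * Z = 0 := by
    have := congrArg Matrix.transpose hZA2; simpa [Matrix.transpose_mul] using this
  have hV1Z : V₁ᵀ * Z = 0 := by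
    have := congrArg Matrix.transpose hZV1; simpa [Matrix.transpose_mul] using this
  have hV2Z : V₂ᵀ * Z = 0 := by
    have := congrArg Matrix.transpose hZV2; simpa [Matrix.transpose_mul] using this
  have e1 : Xᵀ * X * A₁ᵀ + Xᵀ * X * C₁ * Zᵀ = Xᵀ * X * A₂ᵀ + Xᵀ * X * C₂ * Zᵀ := by
    have h := congrArg (fun W => Xᵀ * W) heq
    simp only [Matrix.mul_add, ← Matrix.mul_assoc, hXB1, hXU1, hXB2, hXU2,
      Matrix.zero_mul, add_zero, zero_add] at h
    exact h
  have hAC : A₁ᵀ + C₁ * Zᵀ = A₂ᵀ + C₂ * Zᵀ := by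
    apply cancelL hX1
    simp only [Matrix.mul_add, ← Matrix.mul_assoc]
    exact e1
  have e2 : C₁ * (Zᵀ * Z) = C₂ * (Zᵀ * Z) := by
    have h := congrArg (fun W => W * Z) hAC
    simp only [Matrix.add_mul, Matrix.mul_assoc] at h
    rw [hA1Z, hA2Z, zero_add, zero_add] at h
    exact h
  have hC : C₁ = C₂ := cancelR hZ1 e2
  have hA : A₁ = A₂ := by
    have h : A₁ᵀ = A₂ᵀ := by
      have := hAC; rw [hC] at this; exact add_right_cancel this
    calc A₁ = A₁ᵀᵀ := by rw [Matrix.transpose_transpose]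
      _ = A₂ᵀᵀ := by rw [h]
      _ = A₂ := by rw [Matrix.transpose_transpose]
  have e3 : B₁ * (Zᵀ * Z) = B₂ * (Zᵀ * Z) := by
    have h := congrArg (fun W => W * Z) heq
    simp only [Matrix.add_mul, Matrix.mul_assoc] at h
    rw [hA1Z, hA2Z, hV1Z, hV2Z] at h
    simp only [Matrix.mul_zero, add_zero, zero_add] at h
    rw [hC] at h
    exact add_right_cancel h
  have hB : B₁ = B₂ := cancelR hZ1 e3
  have hT : U₁ * D₁ * V₁ᵀ = U₂ * D₂ * V₂ᵀ := by
    rw [hA, hB, hC] at heq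
    exact add_left_cancel heq
  have hD1 : D₁ = diagonal (fun m => D₁ m m) := hD1diag.diagonal_diag.symm
  have hD2 : D₂ = diagonal (fun m => D₂ m m) := hD2diag.diagonal_diag.symm
  rw [hD1, hD2] at hT
  obtain ⟨hd, hU, hV⟩ := svd_unique U₁ U₂ V₁ V₂ (fun m => D₁ m m) (fun m => D₂ m m)
    hUU1 hVV1 hUU2 hVV2 hD1anti hD2anti hD1pos hD2pos
    (fun m i h => hsgn1 m i h) (fun m i h => hsgn2 m i h) hT
  have hD : D₁ = D₂ := by rw [hD1, hD2, hd]
  exact ⟨hA, hB, hC, hD, hU, hV⟩
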